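/- Let G be a finite simple graph on vertex set {1,...,n} with adjacency matrix A_G and stability number α(G) ≥ 1. Then the minimum of x^T (A_G + I) x over the standard simplex Δ_n = {x ∈ ℝ^n : x ≥ 0, Σ x_i = 1} equals 1/α(G). -/
import Mathlib

open Finset Matrix

/-- The stability number: the maximum cardinality of a stable (independent) set. -/
noncomputable def alpha {V : Type*} [Fintype V] (G : SimpleGraph V) : ℕ :=
  sSup {k | ∃ S : Finset V, (∀ i ∈ S, ∀ j ∈ S, ¬ G.Adj i j) ∧ S.card = k}

namespace MSAux

variable {V : Type*} [Fintype V]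

lemma alpha_bdd (G : SimpleGraph V) :
    BddAbove {k | ∃ S : Finset V, (∀ i ∈ S, ∀ j ∈ S, ¬ G.Adj i j) ∧ S.card = k} := by
  refine ⟨Fintype.card V, ?_⟩
  rintro k ⟨S, -, rfl⟩
  exact S.card_le_univ.trans_eq (by simp)

lemma card_le_alpha (G : SimpleGraph V) (S : Finset V)
    (hS : ∀ i ∈ S, ∀ j ∈ S, ¬ G.Adj i j) : S.card ≤ alpha G :=
  le_csSup (alpha_bdd G) ⟨S, hS, rfl⟩

lemma exists_max_stable (G : SimpleGraph V) :
    ∃ S : Finset V, (∀ i ∈ S, ∀ j ∈ S, ¬ G.Adj i j) ∧ S.card = alpha G := by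
  have h : alpha G ∈ {k | ∃ S : Finset V, (∀ i ∈ S, ∀ j ∈ S, ¬ G.Adj i j) ∧ S.card = k} :=
    Nat.sSup_mem ⟨0, ∅, by simp⟩ (alpha_bdd G)
  exact h

variable {n : ℕ}

/-- quadratic form associated to a weight function -/
def Q (f : Fin n → Fin n → ℝ) (x : Fin n → ℝ) : ℝ := ∑ p, ∑ q, f p q * x p * x q

lemma decomp (f : Fin n → Fin n → ℝ) (hf : ∀ p q, f p q = f q p) {i : Fin n}
    (hii : f i i = 0) (x : Fin n → ℝ) (c : ℝ) :
    Q f (Function.update x i c)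
      = Q f (Function.update x i 0) + 2 * c * ∑ q, f i q * (Function.update x i 0) q := by
  set u := Function.update x i 0 with hu
  have hui : u i = 0 := by simp [hu]
  have hv : ∀ p, Function.update x i c p = u p + (if p = i then c else 0) := by
    intro p
    simp only [hu, Function.update_apply]
    split_ifs <;> simp_all
  have key : ∀ p q, f p q * (Function.update x i c p) * (Function.update x i c q)
      = f p q * u p * u q + ((if p = i then c * (f i q * u q) else 0)
        + ((if q = i then c * (f p i * u p) else 0)
        + (if p = i then (if q = i then c * c * f p q else 0) else 0))) := by
    intro p q
    rw [hv p, hv q]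
    by_cases hp : p = i <;> by_cases hq : q = i <;> simp [hp, hq, hui, hii] <;> ring
  simp only [Q, key, Finset.sum_add_distrib, Finset.sum_ite_irrel, Finset.sum_const_zero,
    Finset.sum_ite_eq', Finset.mem_univ, if_true, hii]
  have h1 : ∑ q, c * (f i q * u q) = c * ∑ q, f i q * u q := by rw [Finset.mul_sum]
  have h2 : ∑ p, c * (f p i * u p) = c * ∑ q, f i q * u q := by
    rw [Finset.mul_sum]; congr 1; ext p; rw [hf p i]
  rw [h1, h2]; ring

lemma shift (f : Fin n → Fin n → ℝ) (hf : ∀ p q, f p q = f q p) {i j : Fin n}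
    (hij : i ≠ j) (hfi : f i i = 0) (hfj : f j j = 0) (hfij : f i j = 0)
    (x : Fin n → ℝ) (hx : ∀ p, 0 ≤ x p) :
    Q f x ≤ max (Q f (Function.update (Function.update x i (x i + x j)) j 0))
               (Q f (Function.update (Function.update x j (x i + x j)) i 0)) := by
  set xj := Function.update x j 0 with hxj
  set u := Function.update xj i 0 with hu
  set A := ∑ q, f i q * u q with hA
  set B := ∑ q, f j q * u q with hB
  -- Q x = Q u + 2 x i * A + 2 x j * B
  have e1 : Q f x = Q f xj + 2 * (x j) * B := by
    have : x = Function.update xj j (x j) := by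
      rw [hxj, Function.update_idem, Function.update_eq_self]
    conv_lhs => rw [this]
    rw [decomp f hf hfj xj (x j)]
    have h0 : Function.update xj j 0 = xj := by rw [hxj, Function.update_idem]
    rw [h0]
    congr 2
    rw [hB]
    refine Finset.sum_congr rfl fun q _ => ?_
    by_cases hq : q = i
    · simp [hq, hf j i, hfij]
    · rw [hu, Function.update_of_ne hq]
  have e2 : Q f xj = Q f u + 2 * (x i) * A := by
    have : xj = Function.update u i (x i) := by
      funext p
      simp only [hu, hxj, Function.update_apply]
      split_ifs with h1 h2 <;> simp_all
    conv_lhs => rw [this]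
    rw [decomp f hf hfi u (x i)]
    have h0 : Function.update u i 0 = u := by rw [hu, Function.update_idem]
    rw [h0]
  have ey : Q f (Function.update (Function.update x i (x i + x j)) j 0)
      = Q f u + 2 * (x i + x j) * A := by
    have hy : Function.update (Function.update x i (x i + x j)) j 0
        = Function.update u i (x i + x j) := by
      funext p
      simp only [hu, hxj, Function.update_apply]
      split_ifs <;> simp_all
    rw [hy, decomp f hf hfi u (x i + x j)]
    have h0 : Function.update u i 0 = u := by rw [hu, Function.update_idem]
    rw [h0]
  have ez : Q f (Function.update (Function.update x j (x i + x j)) i 0)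
      = Q f u + 2 * (x i + x j) * B := by
    have hz : Function.update (Function.update x j (x i + x j)) i 0
        = Function.update u j (x i + x j) := by
      funext p
      simp only [hu, hxj, Function.update_apply]
      split_ifs <;> simp_all
    rw [hz]
    have : Q f (Function.update u j (x i + x j))
        = Q f (Function.update u j 0) + 2 * (x i + x j) * ∑ q, f j q * (Function.update u j 0) q := by
      exact decomp f hf hfj u (x i + x j)
    rw [this]
    have h0 : Function.update u j 0 = u := by
      funext p
      simp only [hu, hxj, Function.update_apply]
      split_ifs <;> simp_all
    rw [h0]
  rw [e1, e2, ey, ez]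
  rcases le_total A B with h | h
  · refine le_max_of_le_right ?_
    nlinarith [hx i, hx j]
  · refine le_max_of_le_left ?_
    nlinarith [hx i, hx j]

section Graph

variable (G : SimpleGraph (Fin n)) [DecidableRel G.Adj]

/-- weight function: 1 on distinct non-adjacent pairs (edges of the complement). -/
def fQ : Fin n → Fin n → ℝ := fun p q => if p ≠ q ∧ ¬ G.Adj p q then 1 else 0

lemma fQ_symm : ∀ p q, fQ G p q = fQ G q p := by
  intro p q
  unfold fQ
  by_cases h : p = q
  · simp [h]
  · simp only [ne_eq, h, Ne.symm h, not_false_eq_true, true_and, G.adj_comm p q]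

lemma fQ_diag (p : Fin n) : fQ G p p = 0 := by simp [fQ]

lemma fQ_adj {p q : Fin n} (h : G.Adj p q) : fQ G p q = 0 := by simp [fQ, h]

lemma split_pointwise (x : Fin n → ℝ) (p q : Fin n) :
    x p * x q = fQ G p q * x p * x q + ((if p = q then x p * x q else 0)
      + (if G.Adj p q then x p * x q else 0)) := by
  unfold fQ
  by_cases h1 : p = q
  · simp [h1]
  · by_cases h2 : G.Adj p q <;> simp [h1, h2]

lemma one_eq (x : Fin n → ℝ) (hsum : ∑ p, x p = 1) :
    Q (fQ G) x + (∑ p, x p * x p)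
      + (∑ p, ∑ q, if G.Adj p q then x p * x q else 0) = 1 := by
  have h : (∑ p, x p) * (∑ q, x q) = 1 := by rw [hsum]; ring
  rw [Finset.sum_mul_sum] at h
  have hsplit : ∑ p, ∑ q, x p * x q
      = ∑ p, ∑ q, (fQ G p q * x p * x q + ((if p = q then x p * x q else 0)
        + (if G.Adj p q then x p * x q else 0))) :=
    Finset.sum_congr rfl fun p _ => Finset.sum_congr rfl fun q _ => split_pointwise G x p q
  rw [hsplit] at h
  simp only [Finset.sum_add_distrib] at h
  have hd : ∑ p, ∑ q, (if p = q then x p * x q else 0) = ∑ p, x p * x p := by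
    refine Finset.sum_congr rfl fun p _ => ?_
    simp
  rw [hd] at h
  simp only [Q]
  linarith

lemma quad_eq (x : Fin n → ℝ) :
    x ⬝ᵥ ((G.adjMatrix ℝ + 1) *ᵥ x)
      = (∑ p, x p * x p) + ∑ p, ∑ q, (if G.Adj p q then x p * x q else 0) := by
  simp only [dotProduct, mulVec, dotProduct, Matrix.add_apply, Matrix.one_apply,
    SimpleGraph.adjMatrix_apply]
  have : ∀ p, x p * (∑ q, ((if G.Adj p q then (1:ℝ) else 0) + if p = q then 1 else 0) * x q)
      = x p * x p + ∑ q, (if G.Adj p q then x p * x q else 0) := by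
    intro p
    rw [Finset.mul_sum]
    have : ∀ q, x p * (((if G.Adj p q then (1:ℝ) else 0) + if p = q then 1 else 0) * x q)
        = (if G.Adj p q then x p * x q else 0) + (if p = q then x p * x q else 0) := by
      intro q
      by_cases h1 : G.Adj p q <;> by_cases h2 : p = q <;> simp [h1, h2] <;> ring
    rw [Finset.sum_congr rfl fun q _ => this q, Finset.sum_add_distrib]
    simp [add_comm]
  rw [Finset.sum_congr rfl fun p _ => this p, Finset.sum_add_distrib]

set_option maxHeartbeats 1000000 in
lemma key (hα1 : 1 ≤ alpha G) (s : Finset (Fin n)) :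
    ∀ x : Fin n → ℝ, (∀ p, 0 ≤ x p) → (∀ p, p ∉ s → x p = 0) → (∑ p, x p = 1) →
      Q (fQ G) x ≤ 1 - 1 / (alpha G : ℝ) := by
  induction s using Finset.strongInduction with
  | _ s ih =>
    intro x hx hsupp hsum
    by_cases hpair : ∃ i ∈ s, ∃ j ∈ s, G.Adj i j
    · obtain ⟨i, hi, j, hj, hadj⟩ := hpair
      have hij : i ≠ j := G.ne_of_adj hadj
      set y := Function.update (Function.update x i (x i + x j)) j 0 with hy
      set z := Function.update (Function.update x j (x i + x j)) i 0 with hz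
      have hmax := shift (fQ G) (fQ_symm G) hij (fQ_diag G i) (fQ_diag G j)
        (fQ_adj G hadj) x hx
      have hye : ∀ p, y p = x p + ((if p = i then x j else 0) - (if p = j then x j else 0)) := by
        intro p
        simp only [hy, Function.update_apply]
        split_ifs <;> simp_all <;> ring
      have hze : ∀ p, z p = x p + ((if p = j then x i else 0) - (if p = i then x i else 0)) := by
        intro p
        simp only [hz, Function.update_apply]
        split_ifs <;> simp_all <;> ring
      have hysum : ∑ p, y p = 1 := by
        rw [Finset.sum_congr rfl fun p _ => hye p]
        simp [Finset.sum_add_distrib, Finset.sum_sub_distrib, hsum]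
      have hzsum : ∑ p, z p = 1 := by
        rw [Finset.sum_congr rfl fun p _ => hze p]
        simp [Finset.sum_add_distrib, Finset.sum_sub_distrib, hsum]
      have hynn : ∀ p, 0 ≤ y p := by
        intro p
        have h1 := hx i; have h2 := hx j; have h3 := hx p
        simp only [hy, Function.update_apply]
        split_ifs <;> linarith
      have hznn : ∀ p, 0 ≤ z p := by
        intro p
        have h1 := hx i; have h2 := hx j; have h3 := hx p
        simp only [hz, Function.update_apply]
        split_ifs <;> linarith
      have hysupp : ∀ p, p ∉ s.erase j → y p = 0 := by
        intro p hp
        by_cases h1 : p = j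
        · simp [hy, h1]
        · by_cases h2 : p = i
          · exact absurd (Finset.mem_erase.mpr ⟨h2 ▸ hij, h2 ▸ hi⟩) hp
          · rw [hy, Function.update_of_ne h1, Function.update_of_ne h2]
            exact hsupp p fun h => hp (Finset.mem_erase.mpr ⟨h1, h⟩)
      have hzsupp : ∀ p, p ∉ s.erase i → z p = 0 := by
        intro p hp
        by_cases h1 : p = i
        · simp [hz, h1]
        · by_cases h2 : p = j
          · exact absurd (Finset.mem_erase.mpr ⟨h2 ▸ hij.symm, h2 ▸ hj⟩) hp
          · rw [hz, Function.update_of_ne h1, Function.update_of_ne h2]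
            exact hsupp p fun h => hp (Finset.mem_erase.mpr ⟨h1, h⟩)
      have hYB := ih (s.erase j) (Finset.erase_ssubset hj) y hynn hysupp hysum
      have hZB := ih (s.erase i) (Finset.erase_ssubset hi) z hznn hzsupp hzsum
      exact hmax.trans (max_le hYB hZB)
    · push_neg at hpair
      have hcard : s.card ≤ alpha G := card_le_alpha G s hpair
      have hsum_s : ∑ p ∈ s, x p = 1 := by
        rw [← hsum]
        exact (Finset.sum_subset (Finset.subset_univ s) fun p _ hp => hsupp p hp)
      have hCS : (1:ℝ) ≤ (s.card : ℝ) * ∑ p ∈ s, x p ^ 2 := by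
        have h := sq_sum_le_card_mul_sum_sq (s := s) (f := x)
        rw [hsum_s] at h
        simpa using h
      have hE : 0 ≤ ∑ p, ∑ q, (if G.Adj p q then x p * x q else 0) := by
        refine Finset.sum_nonneg fun p _ => Finset.sum_nonneg fun q _ => ?_
        split_ifs
        · exact mul_nonneg (hx p) (hx q)
        · exact le_rfl
      have hD : ∑ p ∈ s, x p ^ 2 ≤ ∑ p, x p * x p := by
        calc ∑ p ∈ s, x p ^ 2 = ∑ p ∈ s, x p * x p := by
              refine Finset.sum_congr rfl fun p _ => ?_; ring
          _ ≤ ∑ p, x p * x p :=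
              Finset.sum_le_sum_of_subset_of_nonneg (Finset.subset_univ s)
                fun p _ _ => mul_self_nonneg _
      have hαpos : (0:ℝ) < (alpha G : ℝ) := Nat.cast_pos.mpr hα1
      have hscard : (s.card : ℝ) ≤ (alpha G : ℝ) := by exact_mod_cast hcard
      have hT0 : (0:ℝ) ≤ ∑ p ∈ s, x p ^ 2 :=
        Finset.sum_nonneg fun p _ => sq_nonneg _
      have hT : 1 / (alpha G : ℝ) ≤ ∑ p, x p * x p := by
        rw [div_le_iff₀ hαpos]
        nlinarith [hCS, hscard, hT0, hD, hαpos]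
      have hone := one_eq G x hsum
      linarith

end Graph

end MSAux

/-- Motzkin–Straus: the minimum of `xᵀ(A_G + I)x` over the standard simplex is `1/α(G)`. -/
theorem motzkin_straus {n : ℕ} (G : SimpleGraph (Fin n)) [DecidableRel G.Adj]
    (hα : 1 ≤ alpha G) :
    IsLeast {v : ℝ | ∃ x ∈ stdSimplex ℝ (Fin n),
        v = x ⬝ᵥ ((G.adjMatrix ℝ + 1) *ᵥ x)} (1 / (alpha G : ℝ)) := by
  classical
  obtain ⟨S, hS, hScard⟩ := MSAux.exists_max_stable G
  have hαpos : (0:ℝ) < (alpha G : ℝ) := Nat.cast_pos.mpr hα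
  constructor
  · -- the value 1/α is attained
    refine ⟨fun p => if p ∈ S then ((alpha G : ℝ))⁻¹ else 0, ⟨fun p => ?_, ?_⟩, ?_⟩
    · dsimp only
      split_ifs
      · positivity
      · exact le_rfl
    · simp only [Finset.sum_ite_mem, Finset.univ_inter, Finset.sum_const, hScard,
        nsmul_eq_mul]
      field_simp
    · rw [MSAux.quad_eq]
      have hE : ∑ p, ∑ q, (if G.Adj p q then
          (if p ∈ S then ((alpha G : ℝ))⁻¹ else 0) * (if q ∈ S then ((alpha G : ℝ))⁻¹ else 0)
          else 0) = 0 := by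
        refine Finset.sum_eq_zero fun p _ => Finset.sum_eq_zero fun q _ => ?_
        by_cases h : G.Adj p q
        · by_cases h1 : p ∈ S
          · by_cases h2 : q ∈ S
            · exact absurd h (hS p h1 q h2)
            · simp [h, h1, h2]
          · simp [h, h1]
        · simp [h]
      have hD : ∑ p, (if p ∈ S then ((alpha G : ℝ))⁻¹ else 0)
          * (if p ∈ S then ((alpha G : ℝ))⁻¹ else 0) = 1 / (alpha G : ℝ) := by
        have : ∀ p, (if p ∈ S then ((alpha G : ℝ))⁻¹ else 0)
            * (if p ∈ S then ((alpha G : ℝ))⁻¹ else 0)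
            = if p ∈ S then ((alpha G : ℝ))⁻¹ * ((alpha G : ℝ))⁻¹ else 0 := by
          intro p; split_ifs <;> simp
        rw [Finset.sum_congr rfl fun p _ => this p]
        simp only [Finset.sum_ite_mem, Finset.univ_inter, Finset.sum_const, hScard,
          nsmul_eq_mul]
        field_simp
      rw [hE, hD, add_zero]
  · rintro v ⟨x, hxmem, rfl⟩
    obtain ⟨hx0, hx1⟩ := hxmem
    have hkey := MSAux.key G hα Finset.univ x hx0
      (fun p hp => absurd (Finset.mem_univ p) hp) hx1
    have hone := MSAux.one_eq G x hx1
    have hE : 0 ≤ ∑ p, ∑ q, (if G.Adj p q then x p * x q else 0) := by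
      refine Finset.sum_nonneg fun p _ => Finset.sum_nonneg fun q _ => ?_
      split_ifs
      · exact mul_nonneg (hx0 p) (hx0 q)
      · exact le_rfl
    rw [MSAux.quad_eq]
    linarith
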